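/- Let k ≥ 3 be an integer and let (A_i)_{i=1}^{∞} be a strictly increasing sequence of positive integers with A_1 = 1 such that, for every positive integer h, the set G_h = ⋃_{i=1}^{h} (1/A_{2i}, 1/A_{2i−1}] ⊆ (0,1] is k-good. Then for every positive integer h, Σ_{i=1}^{h} (1/A_{2i−1} − 1/A_{2i}) ≤ liminf_{n→∞} g_k(n)/n, and consequently Σ_{i=1}^{∞} (1/A_{2i−1} − 1/A_{2i}) ≤ liminf_{n→∞} g_k(n)/n. -/

import Mathlib

/-- A set `G` of reals is `k`-good if it contains no geometric progression of
length `k` with integer ratio. -/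
def kGood (k : ℕ) (G : Set ℝ) : Prop :=
  ¬ ∃ (a : ℝ) (r : ℕ), 0 < a ∧ 2 ≤ r ∧ ∀ j < k, a * (r : ℝ) ^ j ∈ G

/-- `gk k n` is the maximum cardinality of a subset of `{1,...,n}` containing no
geometric progression of length `k` with integer ratio. -/
noncomputable def gk (k n : ℕ) : ℕ :=
  sSup {m | ∃ S : Finset ℕ, S ⊆ Finset.Icc 1 n ∧
    (¬ ∃ a r : ℕ, 0 < a ∧ 2 ≤ r ∧ ∀ j < k, a * r ^ j ∈ S) ∧ S.card = m}

open Filter Finset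

lemma gk_set_bdd (k n : ℕ) : BddAbove {m | ∃ S : Finset ℕ, S ⊆ Finset.Icc 1 n ∧
    (¬ ∃ a r : ℕ, 0 < a ∧ 2 ≤ r ∧ ∀ j < k, a * r ^ j ∈ S) ∧ S.card = m} := by
  refine ⟨n, fun m hm => ?_⟩
  obtain ⟨S, hS, -, rfl⟩ := hm
  calc S.card ≤ (Finset.Icc 1 n).card := Finset.card_le_card hS
    _ = n := by simp

/-- main lower bound on gk -/
lemma gk_lower (k : ℕ) (A : ℕ → ℕ)
    (hpos : ∀ i, 0 < A i) (hmono : StrictMono A)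
    (hgood : ∀ h : ℕ, 0 < h → kGood k
      (⋃ i ∈ Finset.range h, Set.Ioc (1 / (A (2 * i + 1) : ℝ)) (1 / (A (2 * i) : ℝ))))
    (h n : ℕ) (hh : 0 < h) (hn : 0 < n) :
    ∑ i ∈ Finset.range h, (n / A (2 * i) - n / A (2 * i + 1)) ≤ gk k n := by
  set S : Finset ℕ := (Finset.range h).biUnion
    (fun i => Finset.Ioc (n / A (2 * i + 1)) (n / A (2 * i))) with hSdef
  have hdisj : ∀ i ∈ Finset.range h, ∀ j ∈ Finset.range h, i ≠ j →
      Disjoint (Finset.Ioc (n / A (2 * i + 1)) (n / A (2 * i)))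
        (Finset.Ioc (n / A (2 * j + 1)) (n / A (2 * j))) := by
    have key : ∀ i j : ℕ, i < j →
        Disjoint (Finset.Ioc (n / A (2 * i + 1)) (n / A (2 * i)))
          (Finset.Ioc (n / A (2 * j + 1)) (n / A (2 * j))) := by
      intro i j hij
      rw [Finset.disjoint_left]
      intro m hm hm'
      simp only [Finset.mem_Ioc] at hm hm'
      have : A (2 * i + 1) ≤ A (2 * j) := hmono.le_iff_le.2 (by omega)
      have : n / A (2 * j) ≤ n / A (2 * i + 1) := Nat.div_le_div_left this (hpos _)
      omega
    intro i hi j hj hij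
    rcases lt_or_gt_of_ne hij with h' | h'
    · exact key i j h'
    · exact (key j i h').symm
  have hcard : S.card = ∑ i ∈ Finset.range h, (n / A (2 * i) - n / A (2 * i + 1)) := by
    rw [hSdef, Finset.card_biUnion hdisj]
    refine Finset.sum_congr rfl fun i _ => ?_
    rw [Nat.card_Ioc]
  have hsub : S ⊆ Finset.Icc 1 n := by
    intro m hm
    simp only [hSdef, Finset.mem_biUnion, Finset.mem_Ioc] at hm
    obtain ⟨i, -, h1, h2⟩ := hm
    exact Finset.mem_Icc.2 ⟨Nat.lt_of_le_of_lt (Nat.zero_le _) h1, le_trans h2 (Nat.div_le_self _ _)⟩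
  have hgp : ¬ ∃ a r : ℕ, 0 < a ∧ 2 ≤ r ∧ ∀ j < k, a * r ^ j ∈ S := by
    rintro ⟨a, r, ha, hr, hmem⟩
    apply hgood h hh
    refine ⟨(a : ℝ) / n, r, by positivity, hr, ?_⟩
    intro j hj
    have := hmem j hj
    simp only [hSdef, Finset.mem_biUnion, Finset.mem_Ioc, Finset.mem_range] at this
    obtain ⟨i, hih, h1, h2⟩ := this
    have hA1 : (0:ℝ) < A (2 * i + 1) := by exact_mod_cast hpos _
    have hA0 : (0:ℝ) < A (2 * i) := by exact_mod_cast hpos _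
    have hnR : (0:ℝ) < n := by exact_mod_cast hn
    simp only [Set.mem_iUnion, Set.mem_Ioc]
    have heq : (a:ℝ) / n * r ^ j = ((a:ℝ) * r ^ j) / n := by ring
    refine ⟨i, Finset.mem_range.2 hih, ?_, ?_⟩
    · rw [heq, div_lt_div_iff₀ hA1 hnR, one_mul]
      rw [Nat.div_lt_iff_lt_mul (hpos _)] at h1
      exact_mod_cast h1
    · rw [heq, div_le_div_iff₀ hnR hA0, one_mul]
      rw [Nat.le_div_iff_mul_le (hpos _)] at h2
      exact_mod_cast h2
  exact le_csSup (gk_set_bdd k n) ⟨S, hsub, hgp, hcard⟩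

lemma gk_le (k n : ℕ) (hk : 0 < k) : gk k n ≤ n := by
  apply csSup_le
  · refine ⟨0, ∅, by simp, ?_, rfl⟩
    rintro ⟨a, r, -, -, hmem⟩
    exact absurd (hmem 0 hk) (Finset.notMem_empty _)
  · rintro m ⟨S, hS, -, rfl⟩
    calc S.card ≤ (Finset.Icc 1 n).card := Finset.card_le_card hS
      _ = n := by simp


/-- Here `A i` denotes the term `A_{i+1}` of the paper, so that
`G_h = ⋃_{i=1}^{h} (1/A_{2i}, 1/A_{2i-1}]`. -/
theorem stmt_16 (k : ℕ) (hk : 3 ≤ k) (A : ℕ → ℕ)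
    (hpos : ∀ i, 0 < A i) (hmono : StrictMono A) (hA1 : A 0 = 1)
    (hgood : ∀ h : ℕ, 0 < h → kGood k
      (⋃ i ∈ Finset.range h, Set.Ioc (1 / (A (2 * i + 1) : ℝ)) (1 / (A (2 * i) : ℝ)))) :
    (∀ h : ℕ, 0 < h →
      ∑ i ∈ Finset.range h, (1 / (A (2 * i) : ℝ) - 1 / (A (2 * i + 1) : ℝ)) ≤
        Filter.atTop.liminf (fun n : ℕ => (gk k n : ℝ) / n)) ∧
    ∑' i : ℕ, (1 / (A (2 * i) : ℝ) - 1 / (A (2 * i + 1) : ℝ)) ≤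
      Filter.atTop.liminf (fun n : ℕ => (gk k n : ℝ) / n) := by
  set v : ℕ → ℝ := fun n : ℕ => (gk k n : ℝ) / n with hv
  -- coboundedness of v
  have hvle : ∀ n, v n ≤ 1 := by
    intro n
    rcases Nat.eq_zero_or_pos n with rfl | hn
    · simp [hv]
    · rw [hv]
      have h1 : (gk k n : ℝ) ≤ n := by exact_mod_cast gk_le k n (by omega)
      have h2 : (0:ℝ) < n := by exact_mod_cast hn
      rw [div_le_one h2]; exact h1
  have hcob : Filter.IsCoboundedUnder (· ≥ ·) Filter.atTop v :=
    (Filter.isBoundedUnder_of ⟨1, hvle⟩).isCoboundedUnder_ge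
  have key : ∀ h : ℕ, 0 < h →
      ∑ i ∈ Finset.range h, (1 / (A (2 * i) : ℝ) - 1 / (A (2 * i + 1) : ℝ)) ≤
        Filter.atTop.liminf v := by
    intro h hh
    set c : ℝ := ∑ i ∈ Finset.range h, (1 / (A (2 * i) : ℝ) - 1 / (A (2 * i + 1) : ℝ)) with hc
    set u : ℕ → ℝ := fun n : ℕ => c - h / n with hu
    have hut : Filter.Tendsto u Filter.atTop (nhds c) := by
      have : Filter.Tendsto (fun n : ℕ => (h:ℝ) / n) Filter.atTop (nhds 0) :=
        tendsto_const_div_atTop_nhds_zero_nat (h:ℝ)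
      simpa using tendsto_const_nhds.sub this
    have huv : ∀ᶠ n in Filter.atTop, u n ≤ v n := by
      filter_upwards [Filter.eventually_ge_atTop 1] with n hn
      have hn' : (0:ℝ) < n := by exact_mod_cast hn
      have hlow := gk_lower k A hpos hmono hgood h n hh hn
      have hcast : (n:ℝ) * c - h ≤
          ((∑ i ∈ Finset.range h, (n / A (2 * i) - n / A (2 * i + 1)) : ℕ) : ℝ) := by
        rw [hc, Finset.mul_sum, Nat.cast_sum]
        have hh' : (h:ℝ) = ∑ _i ∈ Finset.range h, (1:ℝ) := by simp
        rw [hh', ← Finset.sum_sub_distrib]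
        apply Finset.sum_le_sum
        intro i _
        have hle : n / A (2 * i + 1) ≤ n / A (2 * i) :=
          Nat.div_le_div_left (hmono.le_iff_le.2 (by omega)) (hpos _)
        rw [Nat.cast_sub hle]
        have hA0 : (0:ℝ) < A (2 * i) := by exact_mod_cast hpos _
        have hA1 : (0:ℝ) < A (2 * i + 1) := by exact_mod_cast hpos _
        have hup : ((n / A (2 * i + 1) : ℕ) : ℝ) ≤ (n:ℝ) / A (2 * i + 1) :=
          Nat.cast_div_le
        have hdown : (n:ℝ) / A (2 * i) - 1 ≤ ((n / A (2 * i) : ℕ) : ℝ) := by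
          have hlt : n < (n / A (2 * i) + 1) * A (2 * i) :=
            (Nat.div_lt_iff_lt_mul (hpos _)).1 (Nat.lt_succ_self _)
          have : (n:ℝ) < ((n / A (2 * i) : ℕ) + 1) * A (2 * i) := by exact_mod_cast hlt
          rw [sub_le_iff_le_add, div_le_iff₀ hA0]
          linarith
        have e1 : (n:ℝ) * (1 / (A (2 * i) : ℝ)) = (n:ℝ) / A (2 * i) := by ring
        have e2 : (n:ℝ) * (1 / (A (2 * i + 1) : ℝ)) = (n:ℝ) / A (2 * i + 1) := by ring
        rw [mul_sub, e1, e2]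
        linarith
      have : (n:ℝ) * c - h ≤ (gk k n : ℝ) := by
        refine hcast.trans ?_
        exact_mod_cast hlow
      rw [hu, hv]
      rw [sub_le_iff_le_add, ← add_div, le_div_iff₀ hn']
      linarith
    have := Filter.liminf_le_liminf huv (hut.isBoundedUnder_ge) hcob
    rwa [hut.liminf_eq] at this
  refine ⟨key, ?_⟩
  have hL0 : 0 ≤ Filter.atTop.liminf v := by
    refine le_trans ?_ (key 1 one_pos)
    rw [Finset.sum_range_one]
    norm_num [hA1]
    have h2 : (1:ℝ) ≤ (A 1 : ℝ) := by exact_mod_cast hpos 1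
    exact inv_le_one_of_one_le₀ h2
  have hnn : ∀ i, 0 ≤ 1 / (A (2 * i) : ℝ) - 1 / (A (2 * i + 1) : ℝ) := by
    intro i
    have hle : (A (2 * i) : ℝ) ≤ A (2 * i + 1) := by
      exact_mod_cast (hmono.le_iff_le.2 (by omega) : A (2 * i) ≤ A (2 * i + 1))
    have hA0 : (0:ℝ) < A (2 * i) := by exact_mod_cast hpos _
    have := one_div_le_one_div_of_le hA0 hle
    linarith
  have hbd : ∀ h : ℕ, ∑ i ∈ Finset.range h, (1 / (A (2 * i) : ℝ) - 1 / (A (2 * i + 1) : ℝ)) ≤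
      Filter.atTop.liminf v := by
    intro h
    rcases Nat.eq_zero_or_pos h with rfl | hh
    · simpa using hL0
    · exact key h hh
  exact Summable.tsum_le_of_sum_range_le (summable_of_sum_range_le hnn hbd) hbd
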